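/- Let M be a rank-r matroid with n elements and write T_M(x,y) = \sum_{i,j} t_{ij} x^i y^j. Then M is paving if and only if t_{ij} = 0 for all pairs (i,j) with i \ge 2 and j \ge 1. -/

import Mathlib

open MvPolynomial Finset
open scoped Matroid

namespace TuttePaper

open Classical

variable {α : Type*}

/-- The rank of a set in a matroid: the maximum cardinality of an independent subset. -/
noncomputable def rk (M : Matroid α) (A : Set α) : ℕ :=
  sSup {n | ∃ I, M.Indep I ∧ I ⊆ A ∧ I.ncard = n}

/-- The Tutte polynomial of a matroid with finite ground set, as an element of ℤ[x,y];
the variable `X 0` plays the role of `x` and `X 1` that of `y`: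
`T_M(x,y) = ∑_{A ⊆ E} (x-1)^(r(E)-r(A)) (y-1)^(|A|-r(A))`. -/
noncomputable def tutte (M : Matroid α) : MvPolynomial (Fin 2) ℤ :=
  if hE : M.E.Finite then
    ∑ A ∈ hE.toFinset.powerset,
      (X 0 - 1) ^ (rk M M.E - rk M ↑A) * (X 1 - 1) ^ (A.card - rk M ↑A)
  else 0

/-- The Tutte polynomial with `x` evaluated at `1`, i.e. `T_M(1,y)`, as an element of ℤ[x,y]. -/
noncomputable def tutteX1 (M : Matroid α) : MvPolynomial (Fin 2) ℤ :=
  eval₂ C (fun i => if i = 0 then 1 else X 1) (tutte M)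

/-- A loop of a matroid: an element whose singleton has rank zero. -/
def IsLoop (M : Matroid α) (e : α) : Prop := rk M {e} = 0

/-- A coloop of a matroid: an element contained in every basis. -/
def IsColoop (M : Matroid α) (e : α) : Prop := ∀ B, M.IsBase B → e ∈ B

/-- A circuit of a matroid: a minimal dependent set. -/
def IsCircuit (M : Matroid α) (C : Set α) : Prop :=
  C ⊆ M.E ∧ ¬ M.Indep C ∧ ∀ D ⊂ C, M.Indep D

/-- A hyperplane of a matroid: a flat of rank `r(M) - 1`. -/
def IsHyperplane (M : Matroid α) (H : Set α) : Prop :=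
  M.IsFlat H ∧ rk M H + 1 = rk M M.E

/-- Deletion of a set of elements from a matroid. -/
def deleteSet (M : Matroid α) (D : Set α) : Matroid α := M ↾ (M.E \ D)

/-- Contraction of a set of elements in a matroid, `M/C = (M✶ \ C)✶`. -/
def contractSet (M : Matroid α) (C : Set α) : Matroid α := ((M✶) ↾ (M.E \ C))✶

/-- Deletion of a single element. -/
def deleteElem (M : Matroid α) (e : α) : Matroid α := deleteSet M {e}

/-- Contraction of a single element. -/
def contractElem (M : Matroid α) (e : α) : Matroid α := contractSet M {e}

/-- A matroid is paving if every circuit has size at least the rank of the matroid. -/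
def Paving (M : Matroid α) : Prop := ∀ C, IsCircuit M C → rk M M.E ≤ C.ncard

/-- A matroid is sparse paving if it is paving and any two distinct circuits of size `r(M)`
have symmetric difference of size greater than two. -/
def SparsePaving (M : Matroid α) : Prop :=
  Paving M ∧ ∀ C₁ C₂, IsCircuit M C₁ → IsCircuit M C₂ →
    C₁.ncard = rk M M.E → C₂.ncard = rk M M.E → C₁ ≠ C₂ → 2 < (symmDiff C₁ C₂).ncard

/-- An `m`-partition of a set `E`: a collection of at least two subsets of `E`, each with at
least `m` elements, such that every `m`-element subset of `E` is contained in exactly one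
member of the collection. -/
def IsMPartition (m : ℕ) (E : Set α) (T : Set (Set α)) : Prop :=
  1 < T.ncard ∧ (∀ B ∈ T, B ⊆ E ∧ m ≤ B.ncard) ∧
    ∀ S ⊆ E, S.ncard = m → ∃! B, B ∈ T ∧ S ⊆ B

/-- `tcoef M i j` is the coefficient `t_{ij}` of `x^i y^j` in the Tutte polynomial of `M`. -/
noncomputable def tcoef (M : Matroid α) (i j : ℕ) : ℤ :=
  MvPolynomial.coeff (Finsupp.single (0 : Fin 2) i + Finsupp.single (1 : Fin 2) j) (tutte M)

/-- The characteristic polynomial `χ_N(λ) = ∑_{A ⊆ E} (-1)^{|A|} λ^{r(E)-r(A)}` of a matroid,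
evaluated at an element `l` of a commutative ring. -/
noncomputable def charEval {R : Type*} [CommRing R] (N : Matroid α) (l : R) : R :=
  if hE : N.E.Finite then
    ∑ A ∈ hE.toFinset.powerset, (-1 : R) ^ A.card * l ^ (rk N N.E - rk N ↑A)
  else 0

/-- Crapo's coboundary polynomial `χ̄_M(λ,t) = ∑_{X flat of M} t^{|X|} χ_{M/X}(λ)`,
evaluated at elements `l`, `t` of a commutative ring. -/
noncomputable def cobEval {R : Type*} [CommRing R] (M : Matroid α) (l t : R) : R :=
  if hE : M.E.Finite then
    (hE.toFinset.powerset.filter (fun F : Finset α => M.IsFlat ↑F)).sum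
      (fun F => t ^ F.card * charEval (contractSet M ↑F) l)
  else 0


section Aux

variable {M : Matroid α} {A B C I : Set α}

lemma rk_bddAbove (hA : A.Finite) :
    BddAbove {n | ∃ I, M.Indep I ∧ I ⊆ A ∧ I.ncard = n} := by
  refine ⟨A.ncard, fun n hn => ?_⟩
  obtain ⟨I, -, hIA, rfl⟩ := hn
  exact Set.ncard_le_ncard hIA hA

lemma rk_nonempty : {n | ∃ I, M.Indep I ∧ I ⊆ A ∧ I.ncard = n}.Nonempty :=
  ⟨0, ∅, M.empty_indep, Set.empty_subset _, Set.ncard_empty _⟩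

lemma rk_exists (hA : A.Finite) : ∃ I, M.Indep I ∧ I ⊆ A ∧ I.ncard = rk M A :=
  Nat.sSup_mem rk_nonempty (rk_bddAbove hA)

lemma le_rk (hA : A.Finite) (hI : M.Indep I) (hIA : I ⊆ A) : I.ncard ≤ rk M A :=
  le_csSup (rk_bddAbove hA) ⟨I, hI, hIA, rfl⟩

lemma rk_le_ncard (hA : A.Finite) : rk M A ≤ A.ncard := by
  refine csSup_le rk_nonempty fun n hn => ?_
  obtain ⟨I, -, hIA, rfl⟩ := hn
  exact Set.ncard_le_ncard hIA hA

lemma rk_mono (hB : B.Finite) (hAB : A ⊆ B) : rk M A ≤ rk M B := by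
  obtain ⟨I, hI, hIA, hcard⟩ := rk_exists (hB.subset hAB)
  exact hcard ▸ le_rk hB hI (hIA.trans hAB)

lemma rk_indep (hA : A.Finite) (h : M.Indep A) : rk M A = A.ncard :=
  le_antisymm (rk_le_ncard hA) (le_rk hA h subset_rfl)

lemma rk_dep_lt (hA : A.Finite) (h : ¬ M.Indep A) : rk M A < A.ncard := by
  obtain ⟨I, hI, hIA, hcard⟩ := rk_exists hA
  have hne : I ≠ A := fun he => h (he ▸ hI)
  exact hcard ▸ Set.ncard_lt_ncard (hIA.ssubset_of_ne hne) hA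

lemma exists_circuit (hA : A.Finite) (hAE : A ⊆ M.E) (h : ¬ M.Indep A) :
    ∃ C ⊆ A, IsCircuit M C := by
  obtain ⟨n, hn⟩ : ∃ n, A.ncard = n := ⟨_, rfl⟩
  induction n using Nat.strong_induction_on generalizing A with
  | _ n ih =>
    by_cases hmin : ∀ D ⊂ A, M.Indep D
    · exact ⟨A, subset_rfl, hAE, h, hmin⟩
    · push_neg at hmin
      obtain ⟨D, hDA, hD⟩ := hmin
      obtain ⟨C, hCD, hC⟩ := ih (D.ncard) (hn ▸ Set.ncard_lt_ncard hDA hA)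
        (hA.subset hDA.subset) (hDA.subset.trans hAE) hD rfl
      exact ⟨C, hCD.trans hDA.subset, hC⟩

lemma rk_circuit (hC : IsCircuit M C) (hCfin : C.Finite) : rk M C + 1 = C.ncard := by
  obtain ⟨hCE, hdep, hmin⟩ := hC
  have hne : C.Nonempty := by
    rcases C.eq_empty_or_nonempty with rfl | h
    · exact absurd M.empty_indep hdep
    · exact h
  obtain ⟨e, he⟩ := hne
  have h1 : (C \ {e}).ncard + 1 = C.ncard := Set.ncard_diff_singleton_add_one he hCfin
  have h2 : (C \ {e}).ncard ≤ rk M C :=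
    le_rk hCfin (hmin _ (Set.sdiff_singleton_ssubset.mpr he)) Set.diff_subset
  have h3 : rk M C < C.ncard := rk_dep_lt hCfin hdep
  omega

end Aux

section Aux2
variable {M : Matroid α}

lemma paving_iff_corank (hE : M.E.Finite) :
    Paving M ↔ ∀ A ⊆ M.E, ¬ M.Indep A → rk M M.E ≤ rk M A + 1 := by
  constructor
  · intro hP A hAE hdep
    obtain ⟨C, hCA, hC⟩ := exists_circuit (hE.subset hAE) hAE hdep
    calc rk M M.E ≤ C.ncard := hP C hC
    _ = rk M C + 1 := (rk_circuit hC (hE.subset (hC.1))).symm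
    _ ≤ rk M A + 1 := Nat.add_le_add_right (rk_mono (hE.subset hAE) hCA) 1
  · intro h C hC
    have := h C hC.1 hC.2.1
    rw [← rk_circuit hC (hE.subset hC.1)]
    exact this

end Aux2

section Aux3

lemma single_add_single_eq (k l i j : ℕ) :
    (Finsupp.single (0 : Fin 2) k + Finsupp.single 1 l
      = Finsupp.single (0 : Fin 2) i + Finsupp.single 1 j) ↔ (k = i ∧ l = j) := by
  constructor
  · intro h
    constructor
    · have := DFunLike.congr_fun h 0
      simpa using this
    · have := DFunLike.congr_fun h 1
      simpa using this
  · rintro ⟨rfl, rfl⟩; rfl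

lemma mono_coeff (k l i j : ℕ) :
    coeff (Finsupp.single (0 : Fin 2) i + Finsupp.single 1 j)
      ((X 0 : MvPolynomial (Fin 2) ℤ) ^ k * X 1 ^ l)
      = if k = i ∧ l = j then 1 else 0 := by
  rw [X_pow_eq_monomial, X_pow_eq_monomial, monomial_mul, coeff_monomial, one_mul]
  simp only [single_add_single_eq]

lemma expand_pow (v : Fin 2) (c : ℕ) :
    (X v - 1 : MvPolynomial (Fin 2) ℤ) ^ c
      = ∑ k ∈ Finset.range (c + 1), C ((-1) ^ (c - k) * (c.choose k : ℤ)) * X v ^ k := by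
  rw [sub_eq_add_neg, add_pow]
  refine Finset.sum_congr rfl fun k _ => ?_
  have h1 : (-1 : MvPolynomial (Fin 2) ℤ) = C (-1) := by simp
  have h2 : ((c.choose k : ℕ) : MvPolynomial (Fin 2) ℤ) = C ((c.choose k : ℤ)) := by
    simp
  rw [h1, ← C_pow, h2, map_mul]
  ring

lemma term_coeff (c n i j : ℕ) :
    coeff (Finsupp.single (0 : Fin 2) i + Finsupp.single 1 j)
      (((X 0 : MvPolynomial (Fin 2) ℤ) - 1) ^ c * ((X 1 : MvPolynomial (Fin 2) ℤ) - 1) ^ n)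
      = ((-1 : ℤ)) ^ (c - i + (n - j)) * (c.choose i) * (n.choose j) := by
  rw [expand_pow, expand_pow, Finset.sum_mul_sum, coeff_sum]
  have hterm : ∀ k l : ℕ,
      coeff (Finsupp.single (0 : Fin 2) i + Finsupp.single 1 j)
        ((C ((-1) ^ (c - k) * (c.choose k : ℤ)) * (X 0 : MvPolynomial (Fin 2) ℤ) ^ k) *
          (C ((-1) ^ (n - l) * (n.choose l : ℤ)) * (X 1 : MvPolynomial (Fin 2) ℤ) ^ l))
      = ((-1) ^ (c - k) * (c.choose k : ℤ)) * ((-1) ^ (n - l) * (n.choose l : ℤ)) *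
          (if k = i ∧ l = j then 1 else 0) := by
    intro k l
    have heq : (C ((-1) ^ (c - k) * (c.choose k : ℤ)) * (X 0 : MvPolynomial (Fin 2) ℤ) ^ k) *
          (C ((-1) ^ (n - l) * (n.choose l : ℤ)) * (X 1 : MvPolynomial (Fin 2) ℤ) ^ l)
        = C (((-1) ^ (c - k) * (c.choose k : ℤ)) * ((-1) ^ (n - l) * (n.choose l : ℤ)))
            * ((X 0 : MvPolynomial (Fin 2) ℤ) ^ k * X 1 ^ l) := by
      simp only [map_mul]; ring
    rw [heq, coeff_C_mul, mono_coeff]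
  simp only [coeff_sum, hterm]
  by_cases hi : i ≤ c
  · rw [Finset.sum_eq_single_of_mem i (Finset.mem_range.mpr (by omega))]
    · by_cases hj : j ≤ n
      · rw [Finset.sum_eq_single_of_mem j (Finset.mem_range.mpr (by omega))]
        · simp
          ring
        · intro l _ hl; simp [hl]
      · rw [Nat.choose_eq_zero_of_lt (show n < j by omega)]
        rw [Finset.sum_eq_zero (fun l hl => by
          have : l ≠ j := by simp at hl; omega
          simp [this])]
        push_cast; ring
    · intro k _ hk
      exact Finset.sum_eq_zero (fun l _ => by simp [hk])
  · rw [Nat.choose_eq_zero_of_lt (show c < i by omega)]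
    rw [Finset.sum_eq_zero (fun k hk => Finset.sum_eq_zero (fun l _ => by
      have : k ≠ i := by simp at hk; omega
      simp [this]))]
    push_cast; ring

lemma tcoef_eq (M : Matroid α) (hE : M.E.Finite) (i j : ℕ) :
    tcoef M i j = ∑ A ∈ hE.toFinset.powerset,
      ((-1 : ℤ)) ^ (rk M M.E - rk M ↑A - i + (A.card - rk M ↑A - j)) *
        ((rk M M.E - rk M ↑A).choose i) * ((A.card - rk M ↑A).choose j) := by
  rw [tcoef, tutte, dif_pos hE, coeff_sum]
  exact Finset.sum_congr rfl fun A _ => term_coeff _ _ i j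

end Aux3

/-- a matroid is paving if and only if the coefficients `t_{ij}` of its Tutte
polynomial vanish for all `i ≥ 2` and `j ≥ 1`. -/
theorem paving_iff_tcoef (M : Matroid α) (hE : M.E.Finite) (r n : ℕ)
    (hr : rk M M.E = r) (hn : M.E.ncard = n) :
    Paving M ↔ ∀ i j, 2 ≤ i → 1 ≤ j → tcoef M i j = 0 := by
  clear hr hn
  constructor
  · intro hP i j hi hj
    rw [tcoef_eq M hE]
    refine Finset.sum_eq_zero fun A hA => ?_
    have hAE : ↑A ⊆ M.E := by
      have := Finset.mem_powerset.mp hA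
      intro x hx
      simpa using hE.mem_toFinset.mp (this hx)
    by_cases hdep : M.Indep ↑A
    · have hn0 : A.card - rk M ↑A = 0 := by
        have h1 := rk_indep (A.finite_toSet) hdep
        rw [Set.ncard_coe_finset] at h1
        omega
      rw [hn0, Nat.choose_eq_zero_of_lt (show 0 < j by omega)]
      ring
    · have hcor := (paving_iff_corank hE).mp hP ↑A hAE hdep
      rw [Nat.choose_eq_zero_of_lt (show rk M M.E - rk M ↑A < i by omega)]
      ring
  · intro h
    rw [paving_iff_corank hE]
    by_contra hcon
    push_neg at hcon
    obtain ⟨A, hAE, hdep, hlt⟩ := hcon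
    have hAfin : A.Finite := hE.subset hAE
    set P := hE.toFinset.powerset with hPdef
    have hsubE : ∀ B : Finset α, B ∈ P → ↑B ⊆ M.E := by
      intro B hB x hx
      have := Finset.mem_powerset.mp hB
      simpa using hE.mem_toFinset.mp (this hx)
    have hdep_card : ∀ B : Finset α, ¬ M.Indep ↑B → rk M ↑B < B.card := by
      intro B hB
      have := rk_dep_lt (B.finite_toSet) hB
      rwa [Set.ncard_coe_finset] at this
    classical
    set Dset := P.filter (fun B : Finset α => ¬ M.Indep ↑B) with hDdef
    have hmemA : hAfin.toFinset ∈ Dset := by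
      rw [hDdef, Finset.mem_filter]
      refine ⟨Finset.mem_powerset.mpr ?_, by rwa [Set.Finite.coe_toFinset]⟩
      exact Set.Finite.toFinset_subset_toFinset.mpr hAE
    obtain ⟨A0, hA0, hmax0⟩ := Dset.exists_max_image
      (fun B => rk M M.E - rk M ↑B) ⟨_, hmemA⟩
    set i0 := rk M M.E - rk M ↑A0 with hi0def
    set D2 := Dset.filter (fun B : Finset α => rk M M.E - rk M ↑B = i0) with hD2def
    have hA0D2 : A0 ∈ D2 := by rw [hD2def, Finset.mem_filter]; exact ⟨hA0, rfl⟩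
    obtain ⟨A1, hA1, hmax1⟩ := D2.exists_max_image
      (fun B => B.card - rk M ↑B) ⟨A0, hA0D2⟩
    set j0 := A1.card - rk M ↑A1 with hj0def
    have hA1Dset : A1 ∈ Dset := (Finset.mem_filter.mp hA1).1
    have hA1dep : ¬ M.Indep ↑A1 := (Finset.mem_filter.mp hA1Dset).2
    have hA1i0 : rk M M.E - rk M ↑A1 = i0 := (Finset.mem_filter.mp hA1).2
    have hi0_ge : 2 ≤ i0 := by
      have h1 := hmax0 _ hmemA
      have h2 : rk M ↑(hAfin.toFinset) = rk M A := by rw [Set.Finite.coe_toFinset]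
      rw [h2] at h1
      omega
    have hj0_ge : 1 ≤ j0 := by
      have := hdep_card A1 hA1dep
      omega
    have key : tcoef M i0 j0 = ((P.filter (fun B : Finset α =>
        ¬ M.Indep ↑B ∧ rk M M.E - rk M ↑B = i0 ∧ B.card - rk M ↑B = j0)).card : ℤ) := by
      rw [tcoef_eq M hE, ← Finset.sum_boole]
      refine Finset.sum_congr rfl fun B hB => ?_
      by_cases hdepB : M.Indep ↑B
      · have hn0 : B.card - rk M ↑B = 0 := by
          have h1 := rk_indep (B.finite_toSet) hdepB
          rw [Set.ncard_coe_finset] at h1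
          omega
        rw [hn0, Nat.choose_eq_zero_of_lt (show 0 < j0 by omega),
          if_neg (by tauto)]
        ring
      · have hBD : B ∈ Dset := by
          rw [hDdef, Finset.mem_filter]; exact ⟨hB, hdepB⟩
        have hc_le : rk M M.E - rk M ↑B ≤ i0 := hmax0 B hBD
        by_cases hc : rk M M.E - rk M ↑B = i0
        · have hBD2 : B ∈ D2 := by
            rw [hD2def, Finset.mem_filter]; exact ⟨hBD, hc⟩
          have hn_le : B.card - rk M ↑B ≤ j0 := hmax1 B hBD2
          by_cases hnn : B.card - rk M ↑B = j0
          · rw [hc, hnn, if_pos (⟨hdepB, rfl, rfl⟩ : ¬M.Indep ↑B ∧ i0 = i0 ∧ j0 = j0)]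
            simp
          · rw [Nat.choose_eq_zero_of_lt (show B.card - rk M ↑B < j0 by omega),
              if_neg (by tauto)]
            ring
        · rw [Nat.choose_eq_zero_of_lt (show rk M M.E - rk M ↑B < i0 by omega),
            if_neg (by tauto)]
          ring
    have hpos : 0 < (P.filter (fun B : Finset α =>
        ¬ M.Indep ↑B ∧ rk M M.E - rk M ↑B = i0 ∧ B.card - rk M ↑B = j0)).card := by
      refine Finset.card_pos.mpr ⟨A1, Finset.mem_filter.mpr ⟨?_, hA1dep, hA1i0, rfl⟩⟩
      exact (Finset.mem_filter.mp hA1Dset).1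
    have hzero := h i0 j0 hi0_ge hj0_ge
    rw [key] at hzero
    omega


end TuttePaper
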